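/- Let P be a finite bounded poset, let Γ: m₁,…,m_t be a total order on the maximal chains of P, and let λ be the CE-labeling of P determined by Γ. If two maximal chains m and m' of a rooted interval [x,1̂]_r contain distinct atoms of [x,1̂], then the label sequences of m and m' are distinct. Moreover, for any distinct maximal chains c and c' of a rooted interval [x,y]_r, the label sequence of c is not a prefix of the label sequence of c'. -/

import Mathlib

open scoped Classical

variable {P : Type*} [PartialOrder P] [BoundedOrder P]

/-- `CoverList l` : consecutive entries of `l` are cover relations. -/
def CoverList : List P → Prop
  | x :: y :: t => x ⋖ y ∧ CoverList (y :: t)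
  | _ => True

/-- `SatFromTo l x y` : `l` is a saturated chain (i.e. a maximal chain of the interval
`[x,y]`) starting at `x` and ending at `y`. -/
def SatFromTo (l : List P) (x y : P) : Prop :=
  l ≠ [] ∧ l.head? = some x ∧ l.getLast? = some y ∧ CoverList l

/-- `m` is a maximal chain of the bounded poset `P`. -/
def MaxChainOfP (m : List P) : Prop := SatFromTo m ⊥ ⊤

/-- `r` is a root of `x`, i.e. a maximal chain of `[⊥, x]` (it contains `x`). -/
def RootOf (r : List P) (x : P) : Prop := SatFromTo r ⊥ x

/-- The label sequence of a chain (the second argument, which starts at the last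
element of the root `r`) with respect to a chain-edge labeling `lab`. -/
def labelSeq {Λ : Type*} (lab : List P → P → P → Λ) : List P → List P → List Λ
  | r, x :: y :: t => lab r x y :: labelSeq lab (r ++ [y]) (y :: t)
  | _, _ => []

/-- The pair of rooted cover relations `[u,v]_r`, `[v,w]_{r∪{v}}` is a topological
ascent: its label sequence lexicographically strictly precedes the label sequence of
every other maximal chain of `[u,w]_r`. -/
def TopAscent (lab : List P → P → P → ℤ) (r : List P) (u v w : P) : Prop :=
  ∀ c : List P, SatFromTo c u w → c ≠ [u, v, w] →
    List.Lex (· < ·) (labelSeq lab r [u, v, w]) (labelSeq lab r c)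

/-- The chain (second argument) with root `r` is topologically ascending. -/
def TopAscending (lab : List P → P → P → ℤ) : List P → List P → Prop
  | r, u :: v :: w :: t => TopAscent lab r u v w ∧ TopAscending lab (r ++ [v]) (v :: w :: t)
  | _, _ => True

/-- TCL-labeling : every rooted interval has a unique topologically ascending
maximal chain. -/
def IsTCLLabeling (lab : List P → P → P → ℤ) : Prop :=
  ∀ x y : P, x ≤ y → ∀ r : List P, RootOf r x →
    ∃! c : List P, SatFromTo c x y ∧ TopAscending lab r c

/-- CC-labeling : a TCL-labeling such that in every rooted interval distinct maximal
chains get distinct label sequences, none of which is a prefix of another. -/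
def IsCCLabeling (lab : List P → P → P → ℤ) : Prop :=
  IsTCLLabeling lab ∧
    ∀ x y : P, x ≤ y → ∀ r : List P, RootOf r x →
      ∀ c c' : List P, SatFromTo c x y → SatFromTo c' x y → c ≠ c' →
        ¬ labelSeq lab r c <+: labelSeq lab r c'

/-- CL-labeling with labels in an arbitrary poset `Λ`. -/
def IsCLLabeling {Λ : Type*} [PartialOrder Λ] (lab : List P → P → P → Λ) : Prop :=
  ∀ x y : P, x ≤ y → ∀ r : List P, RootOf r x →
    ∃ c : List P, (SatFromTo c x y ∧ List.Chain' (· < ·) (labelSeq lab r c)) ∧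
      (∀ c' : List P, SatFromTo c' x y → List.Chain' (· < ·) (labelSeq lab r c') → c' = c) ∧
      (∀ c' : List P, SatFromTo c' x y → c' ≠ c →
        List.Lex (· < ·) (labelSeq lab r c) (labelSeq lab r c'))

def TCLShellable (P : Type*) [PartialOrder P] [BoundedOrder P] : Prop :=
  ∃ lab : List P → P → P → ℤ, IsTCLLabeling lab

def CCShellable (P : Type*) [PartialOrder P] [BoundedOrder P] : Prop :=
  ∃ lab : List P → P → P → ℤ, IsCCLabeling lab

def CLShellable (P : Type*) [PartialOrder P] [BoundedOrder P] : Prop :=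
  ∃ (Λ : Type) (_ : PartialOrder Λ) (lab : List P → P → P → Λ), IsCLLabeling lab

/-- `P` is graded : all maximal chains of `P` have the same length. -/
def Graded (P : Type*) [PartialOrder P] [BoundedOrder P] : Prop :=
  ∀ c c' : List P, MaxChainOfP c → MaxChainOfP c' → c.length = c'.length

/-- `Γ` is a total order `m₁, …, m_t` on the maximal chains of `P`. -/
def Enumerates (Γ : List (List P)) : Prop :=
  Γ.Nodup ∧ ∀ m : List P, m ∈ Γ ↔ MaxChainOfP m

/-- `Γ` is a total order on the maximal chains which agrees with (is consistent with)
the lexicographic order on maximal chains induced by `lab`. -/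
def AgreesWithLex (lab : List P → P → P → ℤ) (Γ : List (List P)) : Prop :=
  Enumerates Γ ∧ ∀ i j : ℕ, i < j → j < Γ.length →
    ¬ List.Lex (· < ·) (labelSeq lab [(⊥ : P)] (Γ.getD j []))
        (labelSeq lab [(⊥ : P)] (Γ.getD i []))

/-- Position in `Γ` of the earliest maximal chain containing all elements of `l`. -/
noncomputable def fidx (Γ : List (List P)) (l : List P) : ℕ :=
  Γ.findIdx fun m => decide (∀ a ∈ l, a ∈ m)

/-- `a'` witnesses that the earliest chain containing `r ∪ {a}` is "sandwiched" by
two chains containing `r ∪ {a'}`. -/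
def Sandwiched (Γ : List (List P)) (r : List P) (x a a' : P) : Prop :=
  x ⋖ a' ∧ fidx Γ (r ++ [a']) < fidx Γ (r ++ [a]) ∧
    ∃ l : ℕ, fidx Γ (r ++ [a]) < l ∧ l < Γ.length ∧ ∀ w ∈ r ++ [a'], w ∈ Γ.getD l []

/-- The label (a position in `Γ`) that the CE-labeling determined by the total order
`Γ` assigns to the rooted cover relation `[x,a]_r`. -/
noncomputable def detLabel (Γ : List (List P)) (r : List P) (x a : P) : ℕ :=
  if h : ∃ n : ℕ, ∃ a' : P, Sandwiched Γ r x a a' ∧ fidx Γ (r ++ [a']) = n then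
    detLabel Γ r x (Nat.find_spec h).choose
  else fidx Γ (r ++ [a])
termination_by fidx Γ (r ++ [a])
decreasing_by exact ((Nat.find_spec h).choose_spec).1.2.1

/-- The CE-labeling of `P` determined by the total order `Γ` on maximal chains. -/
noncomputable def detLabeling (Γ : List (List P)) : List P → P → P → ℤ :=
  fun r x a => (detLabel Γ r x a : ℤ)

/-- `Ω` is a recursive first atom set (RFAS) for `P`. -/
def IsRFAS (Ω : List P → P → P → P) : Prop :=
  (∀ c : List P, CoverList c → c.length ≤ 2) ∨
    ∀ x y : P, x < y → ∀ r : List P, RootOf r x →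
      (x ⋖ Ω r x y ∧ Ω r x y ≤ y) ∧
      ∀ a : P, x ⋖ a → a < y →
        (a = Ω r x y ↔ a = Ω r x (Ω (r ++ [a]) a y)) ∧
        (a ≠ Ω r x y →
          ∃ (p : ℕ) (A B : ℕ → P), 1 ≤ p ∧
            (∀ i, 1 ≤ i → i ≤ p → x ⋖ A i ∧ A i ≤ y) ∧
            A p = Ω r x (Ω (r ++ [a]) a y) ∧ A 1 = Ω r x y ∧
            ∀ i, 1 ≤ i → i ≤ p - 1 →
              B i = Ω (r ++ [A (i + 1)]) (A (i + 1)) y ∧ A i = Ω r x (B i))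

/-- The chain (second argument, a saturated chain from the last element of the root to
`y`) is the first atom chain `c(r, x, y)` of the rooted interval with top `y`:
each step except possibly the last follows the first atoms of `Ω`. -/
def IsFAC (Ω : List P → P → P → P) (y : P) : List P → List P → Prop
  | r, x :: z :: t => (t ≠ [] → z = Ω r x y) ∧ IsFAC Ω y (r ++ [z]) (z :: t)
  | _, _ => True

/-- The chain (second argument) with root `r` contains a pseudo descent with respect
to `Ω`. -/
def HasPseudoDescent (Ω : List P → P → P → P) : List P → List P → Prop
  | r, u :: v :: w :: t => v ≠ Ω r u w ∨ HasPseudoDescent Ω (r ++ [v]) (v :: w :: t)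
  | _, _ => False

/-- `m → m'` : `m` is obtained from the maximal chain `m'` by replacing a pseudo
descent `x ⋖ y ⋖ z` of `m'` with the first atom chain `c(m^x, x, z)`. -/
def StepRel (Ω : List P → P → P → P) (m m' : List P) : Prop :=
  MaxChainOfP m ∧ MaxChainOfP m' ∧
    ∃ (x y z : P) (r d c : List P),
      RootOf r x ∧ x ⋖ y ∧ y ⋖ z ∧ y ≠ Ω r x z ∧
      m' = r ++ y :: z :: d ∧
      SatFromTo c x z ∧ IsFAC Ω z r c ∧
      m = r ++ c.tail ++ d

/-- `Γ` is a linear extension of the partial order `⪯` (the reflexive-transitive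
closure of `→`) on the maximal chains of `P`. -/
def LinExtOf (Ω : List P → P → P → P) (Γ : List (List P)) : Prop :=
  Enumerates Γ ∧ ∀ i j : ℕ, i < Γ.length → j < Γ.length →
    Relation.ReflTransGen (StepRel Ω) (Γ.getD i []) (Γ.getD j []) → i ≤ j

/-- `Γ`, a total order on the facets (maximal chains) of the order complex `Δ(P)`,
is a shelling order: for each `j` the intersection of the `j`-th facet with the union
of the earlier ones is pure of dimension one less than that of the `j`-th facet. -/
def IsShelling (Γ : List (List P)) : Prop :=
  ∀ j : ℕ, 0 < j → j < Γ.length → ∀ S : Finset P,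
    S ⊆ (Γ.getD j []).toFinset → (∃ i < j, S ⊆ (Γ.getD i []).toFinset) →
    ∃ T : Finset P, S ⊆ T ∧ T ⊆ (Γ.getD j []).toFinset ∧
      (∃ i < j, T ⊆ (Γ.getD i []).toFinset) ∧
      T.card + 1 = (Γ.getD j []).toFinset.card

/-- Condition (LC) for a linear extension `Γ` of `⪯`. -/
def LCCondition (Γ : List (List P)) : Prop :=
  ∀ i j k : ℕ, i < j → j < k → k < Γ.length →
    ∀ (r : List P) (x y y' z : P), RootOf r x → x ⋖ y → y ⋖ z → x ⋖ y' →
      (∀ w ∈ r ++ [y, z], w ∈ Γ.getD i []) →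
      (∀ w ∈ r ++ [y, z], w ∈ Γ.getD k []) →
      (∀ w ∈ r ++ [y'], w ∈ Γ.getD j []) → y' = y

/-- `Ω` is a labeling-compatible recursive first atom set (LCRFAS). -/
def IsLCRFAS (Ω : List P → P → P → P) : Prop :=
  IsRFAS Ω ∧ ∃ Γ : List (List P), LinExtOf Ω Γ ∧ LCCondition Γ

/-- The CE-labeling `lab` is compatible with the RFAS `Ω` : in every rooted interval
the first atom lies on a lexicographically smallest maximal chain. -/
def Compatible (lab : List P → P → P → ℤ) (Ω : List P → P → P → P) : Prop :=
  ∀ x y : P, x < y → ∀ r : List P, RootOf r x →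
    ∃ c : List P, SatFromTo c x y ∧ Ω r x y ∈ c ∧
      ∀ c' : List P, SatFromTo c' x y →
        ¬ List.Lex (· < ·) (labelSeq lab r c') (labelSeq lab r c)


section AuxProof

variable {P : Type*} [PartialOrder P] [BoundedOrder P]

private lemma coverList_cons_cons {x y : P} {t : List P} (h : CoverList (x :: y :: t)) :
    x ⋖ y ∧ CoverList (y :: t) := h

private lemma chain'_of_coverList : ∀ (l : List P), CoverList l → List.Chain' (· < ·) l
  | [], _ => List.isChain_nil
  | [_], _ => List.isChain_singleton _
  | x :: y :: t, h =>
    List.isChain_cons_cons.mpr ⟨h.1.lt, chain'_of_coverList (y :: t) h.2⟩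

private lemma pairwise_of_coverList (l : List P) (h : CoverList l) : l.Pairwise (· < ·) :=
  List.isChain_iff_pairwise.mp (chain'_of_coverList l h)

private lemma comparable_of_coverList {m : List P} (hm : CoverList m) {a b : P}
    (ha : a ∈ m) (hb : b ∈ m) (hne : a ≠ b) : a < b ∨ b < a := by
  have hp : m.Pairwise (fun a b : P => a < b ∨ b < a) :=
    (pairwise_of_coverList m hm).imp Or.inl
  haveI : Std.Symm (fun a b : P => a < b ∨ b < a) := ⟨fun a b h => h.symm⟩
  exact hp.forall ha hb hne

private lemma le_getLast_of_coverList (l : List P) : ∀ y : P, CoverList l →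
    l.getLast? = some y → ∀ w ∈ l, w ≤ y := by
  induction l with
  | nil => intro y _ h; simp at h
  | cons z t ih =>
    intro y hc hlast w hw
    cases t with
    | nil =>
      simp only [List.getLast?_singleton, Option.some.injEq] at hlast
      simp only [List.mem_singleton] at hw
      subst hlast; subst hw; exact le_refl _
    | cons u t2 =>
      rw [List.getLast?_cons_cons] at hlast
      rcases List.mem_cons.mp hw with rfl | hw2
      · exact le_trans hc.1.le (ih y hc.2 hlast u List.mem_cons_self)
      · exact ih y hc.2 hlast w hw2

private lemma mem_le_of_satFromTo {l : List P} {x y : P} (h : SatFromTo l x y) :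
    ∀ w ∈ l, w ≤ y :=
  le_getLast_of_coverList l y h.2.2.2 h.2.2.1

private lemma satFromTo_cons {l : List P} {x y : P} (h : SatFromTo l x y) :
    ∃ t, l = x :: t := by
  obtain ⟨hne, hhead, -, -⟩ := h
  cases l with
  | nil => exact absurd rfl hne
  | cons z t =>
    refine ⟨t, ?_⟩
    simp only [List.head?_cons, Option.some.injEq] at hhead
    rw [hhead]

private lemma satFromTo_self {l : List P} {x : P} (h : SatFromTo l x x) : l = [x] := by
  obtain ⟨t, rfl⟩ := satFromTo_cons h
  cases t with
  | nil => rfl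
  | cons u t2 =>
    exfalso
    have hxu : x ⋖ u := h.2.2.2.1
    have : u ≤ x := mem_le_of_satFromTo h u (by simp)
    exact absurd (lt_of_lt_of_le hxu.lt this) (lt_irrefl x)

private lemma coverList_concat : ∀ (l : List P) (z w : P), CoverList l →
    l.getLast? = some z → z ⋖ w → CoverList (l ++ [w]) := by
  intro l
  induction l with
  | nil => intro z w _ h; simp at h
  | cons u t ih =>
    intro z w hc hlast hcov
    cases t with
    | nil =>
      simp only [List.getLast?_singleton, Option.some.injEq] at hlast
      subst hlast
      exact ⟨hcov, trivial⟩
    | cons v t2 =>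
      rw [List.getLast?_cons_cons] at hlast
      exact ⟨hc.1, ih z w hc.2 hlast hcov⟩

private lemma satFromTo_concat {l : List P} {x z w : P} (h : SatFromTo l x z) (hc : z ⋖ w) :
    SatFromTo (l ++ [w]) x w := by
  obtain ⟨hne, hhead, hlast, hcov⟩ := h
  refine ⟨by simp, ?_, List.getLast?_concat, coverList_concat l z w hcov hlast hc⟩
  cases l with
  | nil => exact absurd rfl hne
  | cons a t => simpa using hhead

private lemma rootOf_concat {r : List P} {x a : P} (h : RootOf r x) (hc : x ⋖ a) :
    RootOf (r ++ [a]) a :=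
  satFromTo_concat h hc

/-- Every saturated chain from `⊥` extends to a maximal chain of `P`. -/
private lemma exists_maxChain_supset [Fintype P] :
    ∀ (n : ℕ) (z : P) (l : List P),
      (Finset.univ.filter (fun u : P => z < u)).card ≤ n → SatFromTo l ⊥ z →
      ∃ m : List P, MaxChainOfP m ∧ ∀ w ∈ l, w ∈ m := by
  intro n
  induction n with
  | zero =>
    intro z l hc hl
    have hz : z = ⊤ := by
      by_contra hne
      have hzt : z < ⊤ := lt_of_le_of_ne le_top hne
      have hmem : (⊤ : P) ∈ Finset.univ.filter (fun u : P => z < u) := by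
        simp [hzt]
      have := Finset.card_pos.mpr ⟨_, hmem⟩
      omega
    subst hz
    exact ⟨l, hl, fun w hw => hw⟩
  | succ n ih =>
    intro z l hc hl
    by_cases hz : z = ⊤
    · subst hz
      exact ⟨l, hl, fun w hw => hw⟩
    · have hzt : z < ⊤ := lt_of_le_of_ne le_top hz
      obtain ⟨w, hcov, -⟩ := exists_covBy_le_of_lt hzt
      have hsub : (Finset.univ.filter (fun u : P => w < u)) ⊆
          (Finset.univ.filter (fun u : P => z < u)) := by
        intro u hu
        simp only [Finset.mem_filter, Finset.mem_univ, true_and] at hu ⊢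
        exact lt_trans hcov.lt hu
      have hwmem : w ∈ Finset.univ.filter (fun u : P => z < u) := by
        simp [hcov.lt]
      have hwnot : w ∉ Finset.univ.filter (fun u : P => w < u) := by
        simp
      have hcard : (Finset.univ.filter (fun u : P => w < u)).card ≤ n := by
        have hss : (Finset.univ.filter (fun u : P => w < u)) ⊂
            (Finset.univ.filter (fun u : P => z < u)) :=
          Finset.ssubset_iff_of_subset hsub |>.mpr ⟨w, hwmem, hwnot⟩
        have := Finset.card_lt_card hss
        omega
      obtain ⟨m, hm, hsup⟩ := ih w (l ++ [w]) hcard (satFromTo_concat hl hcov)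
      exact ⟨m, hm, fun v hv => hsup v (List.mem_append_left _ hv)⟩

private lemma fidx_lt_length [Fintype P] {Γ : List (List P)} (hΓ : Enumerates Γ)
    {l : List P} {z : P} (hl : SatFromTo l ⊥ z) : fidx Γ l < Γ.length := by
  obtain ⟨m, hm, hsup⟩ :=
    exists_maxChain_supset (Finset.univ.filter (fun u : P => z < u)).card z l le_rfl hl
  apply List.findIdx_lt_length_of_exists
  refine ⟨m, (hΓ.2 m).mpr hm, ?_⟩
  simp only [decide_eq_true_eq]
  exact hsup

private lemma mem_of_fidx_lt {Γ : List (List P)} {l : List P} (h : fidx Γ l < Γ.length) :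
    ∀ w ∈ l, w ∈ Γ.get ⟨fidx Γ l, h⟩ := by
  have := List.findIdx_getElem (p := fun m => decide (∀ a ∈ l, a ∈ m)) (xs := Γ) (w := h)
  exact of_decide_eq_true this

/-- The key structural property of `detLabel`: it is the `fidx` of the root extended by
some atom over the top of the root. -/
private lemma detLabel_eq_fidx (Γ : List (List P)) (r : List P) (x : P) :
    ∀ (n : ℕ) (a : P), fidx Γ (r ++ [a]) = n → x ⋖ a →
      ∃ w : P, x ⋖ w ∧ detLabel Γ r x a = fidx Γ (r ++ [w]) := by
  intro n
  induction n using Nat.strong_induction_on with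
  | _ n ih =>
    intro a hfa hxa
    rw [detLabel]
    split
    · rename_i h
      have hs := (Nat.find_spec h).choose_spec
      have hsand : Sandwiched Γ r x a (Nat.find_spec h).choose := hs.1
      have hlt : fidx Γ (r ++ [(Nat.find_spec h).choose]) < n := hfa ▸ hsand.2.1
      exact ih _ hlt _ rfl hsand.1
    · exact ⟨a, hxa, rfl⟩

/-- The central lemma: for distinct saturated chains of a rooted interval, neither label
sequence is a prefix of the other. -/
private lemma key_no_prefix [Fintype P] (Γ : List (List P)) (hΓ : Enumerates Γ) :
    ∀ (n : ℕ) (x y : P) (r c c' : List P), c.length ≤ n → RootOf r x →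
      SatFromTo c x y → SatFromTo c' x y → c ≠ c' →
      ¬ labelSeq (detLabeling Γ) r c <+: labelSeq (detLabeling Γ) r c' := by
  intro n
  induction n with
  | zero =>
    intro x y r c c' hlen _ hc _ _ _
    obtain ⟨t, rfl⟩ := satFromTo_cons hc
    simp at hlen
  | succ n ih =>
    intro x y r c c' hlen hr hc hc' hne hpre
    obtain ⟨t, rfl⟩ := satFromTo_cons hc
    cases t with
    | nil =>
      -- c = [x], so y = x and c' = [x] as well
      have hyx : x = y := by
        have := hc.2.2.1
        simpa using this
      subst hyx
      exact hne (satFromTo_self hc ▸ (satFromTo_self hc').symm)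
    | cons a t2 =>
      obtain ⟨t', rfl⟩ := satFromTo_cons hc'
      cases t' with
      | nil =>
        have hyx : x = y := by
          have := hc'.2.2.1
          simpa using this
        subst hyx
        have := satFromTo_self hc
        simp at this
      | cons a' t2' =>
        have hxa : x ⋖ a := hc.2.2.2.1
        have hxa' : x ⋖ a' := hc'.2.2.2.1
        have hct : CoverList (a :: t2) := hc.2.2.2.2
        have hct' : CoverList (a' :: t2') := hc'.2.2.2.2
        have hlast : (a :: t2).getLast? = some y := by
          have := hc.2.2.1; rwa [List.getLast?_cons_cons] at this
        have hlast' : (a' :: t2').getLast? = some y := by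
          have := hc'.2.2.1; rwa [List.getLast?_cons_cons] at this
        have hsat2 : SatFromTo (a :: t2) a y := ⟨by simp, rfl, hlast, hct⟩
        have hsat2' : SatFromTo (a' :: t2') a' y := ⟨by simp, rfl, hlast', hct'⟩
        have hpre2 : labelSeq (detLabeling Γ) r (x :: a :: t2)
            = detLabeling Γ r x a :: labelSeq (detLabeling Γ) (r ++ [a]) (a :: t2) := rfl
        have hpre2' : labelSeq (detLabeling Γ) r (x :: a' :: t2')
            = detLabeling Γ r x a' :: labelSeq (detLabeling Γ) (r ++ [a']) (a' :: t2') := rfl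
        rw [hpre2, hpre2'] at hpre
        obtain ⟨-, htail⟩ := List.cons_prefix_cons.mp hpre
        by_cases haa : a = a'
        · subst haa
          refine ih a y (r ++ [a]) (a :: t2) (a :: t2') ?_ (rootOf_concat hr hxa)
            hsat2 hsat2' ?_ htail
          · simpa using hlen
          · intro h; exact hne (by rw [h])
        · -- distinct atoms
          cases t2 with
          | nil =>
            -- then a = y
            have hay : a = y := by simpa using hlast
            subst hay
            have ha'y : a' ≤ a := mem_le_of_satFromTo hc' a' (by simp)
            have : a' < a := lt_of_le_of_ne ha'y (fun h => haa h.symm)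
            exact hxa.2 hxa'.lt this
          | cons b t3 =>
            cases t2' with
            | nil =>
              -- tail of c is nonempty but tail of c' label seq is empty
              have : labelSeq (detLabeling Γ) (r ++ [a]) (a :: b :: t3) = [] :=
                List.prefix_nil.mp htail
              simp [labelSeq] at this
            | cons b' t3' =>
              have hab : a ⋖ b := hct.1
              have hab' : a' ⋖ b' := hct'.1
              have hs1 : labelSeq (detLabeling Γ) (r ++ [a]) (a :: b :: t3)
                  = detLabeling Γ (r ++ [a]) a b ::
                    labelSeq (detLabeling Γ) ((r ++ [a]) ++ [b]) (b :: t3) := rfl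
              have hs1' : labelSeq (detLabeling Γ) (r ++ [a']) (a' :: b' :: t3')
                  = detLabeling Γ (r ++ [a']) a' b' ::
                    labelSeq (detLabeling Γ) ((r ++ [a']) ++ [b']) (b' :: t3') := rfl
              rw [hs1, hs1'] at htail
              obtain ⟨hlab, -⟩ := List.cons_prefix_cons.mp htail
              have hlabN : detLabel Γ (r ++ [a]) a b = detLabel Γ (r ++ [a']) a' b' := by
                have : ((detLabel Γ (r ++ [a]) a b : ℤ)) = (detLabel Γ (r ++ [a']) a' b' : ℤ) :=
                  hlab
                exact_mod_cast this
              obtain ⟨w, haw, hw⟩ := detLabel_eq_fidx Γ (r ++ [a]) a _ b rfl hab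
              obtain ⟨w', haw', hw'⟩ := detLabel_eq_fidx Γ (r ++ [a']) a' _ b' rfl hab'
              -- both fidx values are < Γ.length
              have hsatw : SatFromTo ((r ++ [a]) ++ [w]) ⊥ w :=
                satFromTo_concat (satFromTo_concat hr hxa) haw
              have hsatw' : SatFromTo ((r ++ [a']) ++ [w']) ⊥ w' :=
                satFromTo_concat (satFromTo_concat hr hxa') haw'
              have hflt : fidx Γ ((r ++ [a]) ++ [w]) < Γ.length := fidx_lt_length hΓ hsatw
              have hflt' : fidx Γ ((r ++ [a']) ++ [w']) < Γ.length := fidx_lt_length hΓ hsatw'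
              have hfeq : fidx Γ ((r ++ [a]) ++ [w]) = fidx Γ ((r ++ [a']) ++ [w']) := by
                rw [← hw, ← hw', hlabN]
              -- the chain at that common position contains both a and a'
              have hmema : a ∈ Γ.get ⟨fidx Γ ((r ++ [a]) ++ [w]), hflt⟩ :=
                mem_of_fidx_lt hflt a (by simp)
              have hmema' : a' ∈ Γ.get ⟨fidx Γ ((r ++ [a]) ++ [w]), hflt⟩ := by
                have := mem_of_fidx_lt hflt' a' (by simp)
                have hgeq : Γ.get ⟨fidx Γ ((r ++ [a]) ++ [w]), hflt⟩
                    = Γ.get ⟨fidx Γ ((r ++ [a']) ++ [w']), hflt'⟩ := by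
                  congr 1
                  exact Fin.ext hfeq
                rw [hgeq]
                exact this
              have hmc : MaxChainOfP (Γ.get ⟨fidx Γ ((r ++ [a]) ++ [w]), hflt⟩) :=
                (hΓ.2 _).mp (List.get_mem Γ _)
              rcases comparable_of_coverList hmc.2.2.2 hmema hmema' haa with hlt | hlt
              · exact hxa'.2 hxa.lt hlt
              · exact hxa.2 hxa'.lt hlt

end AuxProof

/-- Proposition 4.5 (ii): for the CE-labeling determined by a total order `Γ` on the
maximal chains, maximal chains of `[x, ⊤]_r` through distinct atoms get distinct label
sequences; moreover, for distinct maximal chains of any rooted interval `[x,y]_r`,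
neither label sequence is a prefix of the other. -/
theorem stmt3 {P : Type*} [PartialOrder P] [BoundedOrder P] [Fintype P]
    (Γ : List (List P)) (hΓ : Enumerates Γ)
    (x : P) (r : List P) (hr : RootOf r x) :
    (∀ m m' : List P, SatFromTo m x ⊤ → SatFromTo m' x ⊤ →
      ∀ (a a' : P) (tm tm' : List P), m = x :: a :: tm → m' = x :: a' :: tm' → a ≠ a' →
        labelSeq (detLabeling Γ) r m ≠ labelSeq (detLabeling Γ) r m') ∧
    (∀ y : P, x ≤ y → ∀ c c' : List P, SatFromTo c x y → SatFromTo c' x y → c ≠ c' →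
      ¬ labelSeq (detLabeling Γ) r c <+: labelSeq (detLabeling Γ) r c') := by
  constructor
  · intro m m' hm hm' a a' tm tm' hmeq hm'eq ha heq
    have hne : m ≠ m' := by
      intro h
      rw [hmeq, hm'eq] at h
      simp only [List.cons.injEq] at h
      exact ha h.2.1
    exact (key_no_prefix Γ hΓ m.length x ⊤ r m m' le_rfl hr hm hm' hne)
      (heq ▸ List.prefix_refl _)
  · intro y _ c c' hc hc' hne
    exact key_no_prefix Γ hΓ c.length x y r c c' le_rfl hr hc hc' hne
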